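/- arXiv:2206.14647 — 3 statements merged into one kernel-verified Lean document; each statement's English description precedes it below -/
import Mathlib

section
/- Let f : ℝ^p → ℝ be C¹ with L-Lipschitz gradient, bounded below, and suppose gradient descent z_i = z_{i-1} - γ_i ∇f(z_{i-1}) is run with step sizes satisfying Σγ_i = ∞ and Σγ_i² < ∞. Then liminf_{i→∞} ‖∇f(z_{i-1})‖² = 0. -/
open Filter Topology RealInnerProductSpace

/-- For gradient descent with `Σγ_i = ∞` and `Σγ_i² < ∞` on a function with Lipschitz
gradient that is bounded below, `liminf ‖∇f(z_{i-1})‖² = 0`. -/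
theorem gd_liminf_grad_zero
    (p : ℕ) (f : EuclideanSpace ℝ (Fin p) → ℝ) (L fstar : ℝ)
    (hf : ContDiff ℝ 1 f) (hL : 0 < L)
    (hLip : ∀ z_w z_u : EuclideanSpace ℝ (Fin p),
      ‖gradient f z_w - gradient f z_u‖ ≤ L * ‖z_w - z_u‖)
    (hbelow : ∀ z, fstar ≤ f z)
    (γ : ℕ → ℝ) (hγ : ∀ i, 0 < γ i)
    (hdiv : Tendsto (fun k => ∑ i ∈ Finset.Icc 1 k, γ i) atTop atTop)
    (hsq : Summable (fun i => γ i ^ 2))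
    (z : ℕ → EuclideanSpace ℝ (Fin p))
    (hz : ∀ i : ℕ, 1 ≤ i → z i = z (i - 1) - γ i • gradient f (z (i - 1))) :
    Filter.liminf (fun i => ‖gradient f (z (i - 1))‖ ^ 2) atTop = 0 := by
  have hdiff : ∀ x, DifferentiableAt ℝ f x := fun x => (hf.differentiable one_ne_zero) x
  have hgf : ∀ x : EuclideanSpace ℝ (Fin p),
      fderiv ℝ f x = InnerProductSpace.toDual ℝ _ (gradient f x) := fun x =>
    (LinearIsometryEquiv.apply_symm_apply _ _).symm
  -- descent lemma
  have descent : ∀ (x : EuclideanSpace ℝ (Fin p)) (t : ℝ), 0 ≤ t →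
      f (x - t • gradient f x) ≤ f x - t * ‖gradient f x‖^2 + L * t^2 * ‖gradient f x‖^2 := by
    intro x t ht
    set g := gradient f x with hg
    set y := x - t • g with hy
    have hyx : y - x = -(t • g) := by rw [hy]; abel
    have hnyx : ‖y - x‖ = t * ‖g‖ := by
      rw [hyx, norm_neg, norm_smul, Real.norm_of_nonneg ht]
    have key : ‖f y - f x - (fderiv ℝ f x) (y - x)‖ ≤ (L * ‖y - x‖) * ‖y - x‖ := by
      refine (convex_closedBall x ‖y - x‖).norm_image_sub_le_of_norm_fderiv_le'
        (fun w _ => hdiff w) (fun w hw => ?_)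
        (Metric.mem_closedBall_self (norm_nonneg _))
        (mem_closedBall_iff_norm.mpr le_rfl)
      have e : fderiv ℝ f w - fderiv ℝ f x
          = InnerProductSpace.toDual ℝ _ (gradient f w - gradient f x) := by
        rw [hgf, hgf, map_sub]
      rw [e, LinearIsometryEquiv.norm_map]
      calc ‖gradient f w - gradient f x‖ ≤ L * ‖w - x‖ := hLip w x
        _ ≤ L * ‖y - x‖ := by gcongr; exact mem_closedBall_iff_norm.mp hw
    have happ : (fderiv ℝ f x) (y - x) = -(t * ‖g‖^2) := by
      rw [hgf, hyx]
      rw [InnerProductSpace.toDual_apply_apply, inner_neg_right, real_inner_smul_right,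
        real_inner_self_eq_norm_sq]
    have h1 : f y - f x - (fderiv ℝ f x) (y - x) ≤ (L * ‖y - x‖) * ‖y - x‖ :=
      (le_abs_self _).trans key
    rw [happ, hnyx] at h1
    have hgnn : (0:ℝ) ≤ ‖g‖ := norm_nonneg _
    nlinarith [h1]
  -- per-step inequality
  have hstep : ∀ i, 1 ≤ i → f (z i) ≤ f (z (i-1)) - γ i * ‖gradient f (z (i-1))‖^2
      + L * (γ i)^2 * ‖gradient f (z (i-1))‖^2 := by
    intro i hi
    rw [hz i hi]
    exact descent _ _ (hγ i).le
  -- γ → 0, pick N with L γ_i ≤ 1/2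
  have hγ0 : Tendsto γ atTop (𝓝 0) := by
    have h2 := hsq.tendsto_atTop_zero
    have h3 : Tendsto (fun i => Real.sqrt (γ i ^ 2)) atTop (𝓝 0) := by
      have := (Real.continuous_sqrt.tendsto 0).comp h2
      simpa [Function.comp_def] using this
    refine h3.congr (fun i => Real.sqrt_sq (hγ i).le)
  obtain ⟨N₀, hN₀⟩ := (hγ0.eventually (gt_mem_nhds (show (0:ℝ) < 1/(2*L) by positivity))).exists_forall_of_atTop
  set N := max N₀ 1 with hN
  have hN1 : 1 ≤ N := le_max_right _ _
  have hsmall : ∀ i, N ≤ i → L * γ i ≤ 1/2 := by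
    intro i hi
    have h1 : γ i < 1 / (2 * L) := hN₀ i (le_trans (le_max_left _ _) hi)
    have h2 : L * γ i < L * (1 / (2 * L)) := by
      exact mul_lt_mul_of_pos_left h1 hL
    have h3 : L * (1 / (2 * L)) = 1 / 2 := by
      field_simp
    linarith
  set a : ℕ → ℝ := fun i => ‖gradient f (z (i-1))‖^2 with ha
  have hann : ∀ i, 0 ≤ a i := fun i => sq_nonneg _
  -- half-step inequality for i ≥ N
  have hhalf : ∀ i, N ≤ i → γ i / 2 * a i ≤ f (z (i-1)) - f (z i) := by
    intro i hi
    have h1 : f (z i) ≤ f (z (i-1)) - γ i * a i + L * (γ i)^2 * a i := hstep i (le_trans hN1 hi)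
    have h2 := hsmall i hi
    have h3 := hann i
    have h4 := (hγ i).le
    have h5 : 0 ≤ γ i * ((1/2 - L * γ i) * a i) :=
      mul_nonneg h4 (mul_nonneg (by linarith) h3)
    nlinarith [h5]
  -- telescoping bound
  have htel : ∀ k, N ≤ k → ∑ i ∈ Finset.Icc N k, γ i / 2 * a i ≤ f (z (N-1)) - fstar := by
    intro k hk
    have main : ∀ k, N ≤ k → ∑ i ∈ Finset.Icc N k, γ i / 2 * a i ≤ f (z (N-1)) - f (z k) := by
      intro k hk
      induction k, hk using Nat.le_induction with
      | base => simpa using hhalf N le_rfl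
      | succ k hk ih =>
        rw [Finset.sum_Icc_succ_top (le_trans hk (Nat.le_succ _))]
        have h2 := hhalf (k+1) (le_trans hk (Nat.le_succ _))
        simp only [Nat.add_sub_cancel] at h2
        linarith
    linarith [main k hk, hbelow (z k)]
  set B := f (z (N-1)) - fstar with hB
  -- frequently small
  have freq : ∀ ε : ℝ, 0 < ε → ∃ᶠ i in atTop, a i ≤ ε := by
    intro ε hε
    by_contra hfreq
    rw [not_frequently] at hfreq
    simp only [not_le] at hfreq
    obtain ⟨M, hM⟩ := hfreq.exists_forall_of_atTop
    set M' := max M N with hM'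
    have hbound : ∀ k, N ≤ k → ε/2 * ∑ i ∈ Finset.Icc M' k, γ i ≤ B := by
      intro k hk
      have h1 : ∑ i ∈ Finset.Icc M' k, ε/2 * γ i ≤ ∑ i ∈ Finset.Icc M' k, γ i / 2 * a i := by
        refine Finset.sum_le_sum fun i hi => ?_
        have hiM : M ≤ i := le_trans (le_max_left _ _) (Finset.mem_Icc.mp hi).1
        have := (hM i hiM).le
        have := (hγ i).le
        nlinarith
      have h2 : ∑ i ∈ Finset.Icc M' k, γ i / 2 * a i ≤ ∑ i ∈ Finset.Icc N k, γ i / 2 * a i := by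
        refine Finset.sum_le_sum_of_subset_of_nonneg ?_
          (fun i _ _ => mul_nonneg (div_nonneg (hγ i).le (by norm_num)) (hann i))
        intro i hi
        rw [Finset.mem_Icc] at *
        exact ⟨le_trans (le_max_right _ _) hi.1, hi.2⟩
      calc ε/2 * ∑ i ∈ Finset.Icc M' k, γ i = ∑ i ∈ Finset.Icc M' k, ε/2 * γ i := by
            rw [Finset.mul_sum]
        _ ≤ _ := h1.trans (h2.trans (htel k hk))
    have hdiv' : Tendsto (fun k => ∑ i ∈ Finset.Icc M' k, γ i) atTop atTop := by
      have hM'1 : 1 ≤ M' := le_trans hN1 (le_max_right M N)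
      have heq : ∀ k, M' - 1 ≤ k → ∑ i ∈ Finset.Icc M' k, γ i
          = (∑ i ∈ Finset.Icc 1 k, γ i) - ∑ i ∈ Finset.Ioc 0 (M'-1), γ i := by
        intro k hk
        have h := Finset.sum_Ioc_consecutive γ (Nat.zero_le (M'-1)) hk
        have e1 : Finset.Icc M' k = Finset.Ioc (M'-1) k := by
          rw [← Finset.Icc_add_one_left_eq_Ioc]
          congr 1
          omega
        have e2 : Finset.Icc 1 k = Finset.Ioc 0 k := Finset.Icc_add_one_left_eq_Ioc 0 k
        rw [e1, e2]
        linarith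
      have htt : Tendsto (fun k => (∑ i ∈ Finset.Icc 1 k, γ i)
          + (-(∑ i ∈ Finset.Ioc 0 (M'-1), γ i))) atTop atTop :=
        tendsto_atTop_add_const_right _ _ hdiv
      refine htt.congr' ?_
      filter_upwards [eventually_ge_atTop (M'-1)] with k hk
      rw [heq k hk]
      ring
    obtain ⟨k, hk1, hk2⟩ :=
      ((hdiv'.eventually_ge_atTop ((2*B+2)/ε)).and (eventually_ge_atTop N)).exists
    have hb := hbound k hk2
    rw [div_le_iff₀ hε] at hk1
    nlinarith
  -- conclude
  refine le_antisymm ?_ ?_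
  · refine le_of_forall_pos_le_add ?_
    intro ε hε
    rw [zero_add]
    exact liminf_le_of_frequently_le (freq ε hε)
      ⟨0, eventually_map.mpr (Eventually.of_forall fun i => sq_nonneg _)⟩
  · refine le_liminf_of_le ?_ (Eventually.of_forall fun i => sq_nonneg _)
    refine ⟨1, fun c hc => ?_⟩
    rw [eventually_map] at hc
    obtain ⟨i, h1, h2⟩ := (hc.and_frequently (freq 1 one_pos)).exists
    exact le_trans h1 h2
end

section
/- Let f : ℝ^p → ℝ be C¹ with L-Lipschitz gradient and bounded below by f*, run gradient descent z_i = z_{i-1} - γ_i ∇f(z_{i-1}) with γ_i = i^{-1/2} for i ≥ 1, and assume additionally ‖∇f(z)‖ ≤ C₀ for all z. Then min_{0 ≤ j < k} ‖∇f(z_j)‖² ≤ (f(z_0) - f* + (L C₀²/2)(1 + log k)) / √k for all k ≥ 1. -/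
open Filter Topology
lemma descent_lemma {p : ℕ} {f : EuclideanSpace ℝ (Fin p) → ℝ} {L : ℝ}
    (hf : Differentiable ℝ f) (hL : 0 ≤ L)
    (hLip : ∀ a b, ‖gradient f a - gradient f b‖ ≤ L * ‖a - b‖)
    (x y : EuclideanSpace ℝ (Fin p)) :
    f y ≤ f x + inner ℝ (gradient f x) (y - x) + L / 2 * ‖y - x‖ ^ 2 := by
  set v := y - x with hv
  have hgcont : Continuous (gradient f) := by
    refine (LipschitzWith.of_dist_le_mul (K := L.toNNReal) fun a b => ?_).continuous
    have := hLip a b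
    rw [dist_eq_norm, dist_eq_norm]
    calc ‖gradient f a - gradient f b‖ ≤ L * ‖a - b‖ := this
      _ ≤ L.toNNReal * ‖a - b‖ :=
          mul_le_mul_of_nonneg_right (Real.le_coe_toNNReal L) (norm_nonneg _)
  have hder : ∀ t : ℝ, HasDerivAt (fun s : ℝ => f (x + s • v))
      ((inner ℝ (gradient f (x + t • v)) v : ℝ)) t := by
    intro t
    have h1 : HasDerivAt (fun s : ℝ => x + s • v) v t := by
      simpa using ((hasDerivAt_id t).smul_const v).const_add x
    have h2 : HasFDerivAt f
        ((InnerProductSpace.toDual ℝ _) (gradient f (x + t • v))) (x + t • v) :=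
      hasGradientAt_iff_hasFDerivAt.mp (hf _).hasGradientAt
    have h3 := h2.comp_hasDerivAt t h1
    rw [InnerProductSpace.toDual_apply_apply] at h3
    exact h3
  have hcont : Continuous fun t : ℝ => (inner ℝ (gradient f (x + t • v)) v : ℝ) := by
    exact (hgcont.comp (by continuity)).inner continuous_const
  have hFTC : ∫ t in (0:ℝ)..1, (inner ℝ (gradient f (x + t • v)) v : ℝ)
      = f (x + (1:ℝ) • v) - f (x + (0:ℝ) • v) :=
    intervalIntegral.integral_eq_sub_of_hasDerivAt (fun t _ => hder t)
      (hcont.intervalIntegrable 0 1)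
  have hxy : x + (1:ℝ) • v = y := by rw [one_smul, hv]; abel
  have hx0 : x + (0:ℝ) • v = x := by simp
  rw [hxy, hx0] at hFTC
  have hbound : ∫ t in (0:ℝ)..1, (inner ℝ (gradient f (x + t • v)) v : ℝ)
      ≤ ∫ t in (0:ℝ)..1, ((inner ℝ (gradient f x) v : ℝ) + L * t * ‖v‖ ^ 2) := by
    apply intervalIntegral.integral_mono_on (by norm_num)
      (hcont.intervalIntegrable 0 1)
      ((by continuity : Continuous fun t : ℝ =>
        (inner ℝ (gradient f x) v : ℝ) + L * t * ‖v‖ ^ 2).intervalIntegrable 0 1)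
    intro t ht
    have h1 : (inner ℝ (gradient f (x + t • v)) v : ℝ) - inner ℝ (gradient f x) v
        = inner ℝ (gradient f (x + t • v) - gradient f x) v := by
      rw [inner_sub_left]
    have h2 : (inner ℝ (gradient f (x + t • v) - gradient f x) v : ℝ)
        ≤ ‖gradient f (x + t • v) - gradient f x‖ * ‖v‖ :=
      real_inner_le_norm _ _
    have h3 : ‖gradient f (x + t • v) - gradient f x‖ ≤ L * (t * ‖v‖) := by
      have := hLip (x + t • v) x
      simpa [norm_smul, abs_of_nonneg ht.1] using this
    have h4 : ‖gradient f (x + t • v) - gradient f x‖ * ‖v‖ ≤ L * (t * ‖v‖) * ‖v‖ :=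
      mul_le_mul_of_nonneg_right h3 (norm_nonneg v)
    have h5 : L * (t * ‖v‖) * ‖v‖ = L * t * ‖v‖ ^ 2 := by ring
    linarith [h1 ▸ h2]
  have hint : ∫ t in (0:ℝ)..1, ((inner ℝ (gradient f x) v : ℝ) + L * t * ‖v‖ ^ 2)
      = (inner ℝ (gradient f x) v : ℝ) + L / 2 * ‖v‖ ^ 2 := by
    rw [intervalIntegral.integral_add (f := fun _ => (inner ℝ (gradient f x) v : ℝ))
      (g := fun t : ℝ => L * t * ‖v‖ ^ 2) (intervalIntegrable_const)
      (((continuous_const.mul continuous_id').mul continuous_const :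
        Continuous fun t : ℝ => L * t * ‖v‖ ^ 2).intervalIntegrable 0 1)]
    simp only [intervalIntegral.integral_const, smul_eq_mul]
    have : ∫ t in (0:ℝ)..1, L * t * ‖v‖ ^ 2 = L / 2 * ‖v‖ ^ 2 := by
      have : (fun t : ℝ => L * t * ‖v‖ ^ 2) = fun t : ℝ => (L * ‖v‖ ^ 2) * t := by
        funext t; ring
      rw [this, intervalIntegral.integral_const_mul, integral_id]
      ring
    rw [this]; ring
  rw [hFTC, hint] at hbound
  linarith

/-- Nonconvex gradient-descent rate with step sizes `γ_i = i^{-1/2}`: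
`min_{0 ≤ j < k} ‖∇f(z_j)‖² ≤ (f(z₀) - f* + (L C₀²/2)(1 + log k)) / √k`. -/
theorem gd_min_grad_rate
    (p : ℕ) (f : EuclideanSpace ℝ (Fin p) → ℝ) (L fstar C₀ : ℝ)
    (hf : ContDiff ℝ 1 f) (hL : 0 < L) (hC₀ : 0 < C₀)
    (hLip : ∀ z_w z_u : EuclideanSpace ℝ (Fin p),
      ‖gradient f z_w - gradient f z_u‖ ≤ L * ‖z_w - z_u‖)
    (hbelow : ∀ z, fstar ≤ f z)
    (hgradbdd : ∀ z, ‖gradient f z‖ ≤ C₀)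
    (z : ℕ → EuclideanSpace ℝ (Fin p))
    (hz : ∀ i : ℕ, 1 ≤ i →
      z i = z (i - 1) - ((i : ℝ) ^ (-(1/2 : ℝ))) • gradient f (z (i - 1))) :
    ∀ k : ℕ, ∀ hk : 1 ≤ k,
      ((Finset.range k).inf' (Finset.nonempty_range_iff.mpr (by omega))
          fun j => ‖gradient f (z j)‖ ^ 2)
        ≤ (f (z 0) - fstar + (L * C₀ ^ 2 / 2) * (1 + Real.log k)) / Real.sqrt k := by
  have hdiff : Differentiable ℝ f := hf.differentiable one_ne_zero
  have step : ∀ j : ℕ, ((j : ℝ) + 1) ^ (-(1/2 : ℝ)) * ‖gradient f (z j)‖ ^ 2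
      ≤ f (z j) - f (z (j + 1)) + L * C₀ ^ 2 / 2 * (1 / ((j : ℝ) + 1)) := by
    intro j
    set γ : ℝ := ((j : ℝ) + 1) ^ (-(1/2 : ℝ)) with hγ
    have hγpos : 0 < γ := Real.rpow_pos_of_pos (by positivity) _
    have hzj : z (j + 1) = z j - γ • gradient f (z j) := by
      have h := hz (j + 1) (by omega)
      simpa [hγ] using h
    have hd := descent_lemma hdiff hL.le hLip (z j) (z (j + 1))
    rw [hzj] at hd
    have hsub : z j - γ • gradient f (z j) - z j = -(γ • gradient f (z j)) := by abel
    rw [hsub] at hd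
    have hinner : (inner ℝ (gradient f (z j)) (-(γ • gradient f (z j))) : ℝ)
        = -(γ * ‖gradient f (z j)‖ ^ 2) := by
      rw [inner_neg_right, real_inner_smul_right, real_inner_self_eq_norm_sq]
    have hnorm : ‖-(γ • gradient f (z j))‖ ^ 2 = γ ^ 2 * ‖gradient f (z j)‖ ^ 2 := by
      rw [norm_neg, norm_smul, mul_pow, Real.norm_eq_abs, sq_abs]
    have hγsq : γ ^ 2 = 1 / ((j : ℝ) + 1) := by
      rw [hγ, ← Real.rpow_natCast (((j : ℝ) + 1) ^ (-(1/2 : ℝ))) 2,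
        ← Real.rpow_mul (by positivity)]
      norm_num [Real.rpow_neg_one]
    have hg2 : ‖gradient f (z j)‖ ^ 2 ≤ C₀ ^ 2 := by
      have := hgradbdd (z j)
      nlinarith [norm_nonneg (gradient f (z j))]
    rw [hinner, hnorm, hγsq] at hd
    have hpos : (0 : ℝ) < (j : ℝ) + 1 := by positivity
    have h2 : L / 2 * (1 / ((j : ℝ) + 1) * ‖gradient f (z j)‖ ^ 2)
        ≤ L * C₀ ^ 2 / 2 * (1 / ((j : ℝ) + 1)) := by
      have hmono : 1 / ((j : ℝ) + 1) * ‖gradient f (z j)‖ ^ 2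
          ≤ 1 / ((j : ℝ) + 1) * C₀ ^ 2 :=
        mul_le_mul_of_nonneg_left hg2 (by positivity)
      have h5 := mul_le_mul_of_nonneg_left hmono (by positivity : (0:ℝ) ≤ L / 2)
      have heq : L / 2 * (1 / ((j : ℝ) + 1) * C₀ ^ 2)
          = L * C₀ ^ 2 / 2 * (1 / ((j : ℝ) + 1)) := by ring
      linarith
    rw [← hzj] at hd
    linarith
  intro k hk
  have hkpos : (0 : ℝ) < (k : ℝ) := by exact_mod_cast Nat.pos_of_ne_zero (by omega)
  set m := ((Finset.range k).inf' (Finset.nonempty_range_iff.mpr (by omega))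
    fun j => ‖gradient f (z j)‖ ^ 2) with hm
  have hm_nonneg : 0 ≤ m :=
    Finset.le_inf' _ _ (fun j _ => by positivity)
  -- sum of steps
  have hsum1 : ∑ j ∈ Finset.range k, ((j : ℝ) + 1) ^ (-(1/2 : ℝ)) * ‖gradient f (z j)‖ ^ 2
      ≤ f (z 0) - f (z k) + L * C₀ ^ 2 / 2 * ∑ j ∈ Finset.range k, (1 / ((j : ℝ) + 1)) := by
    calc ∑ j ∈ Finset.range k, ((j : ℝ) + 1) ^ (-(1/2 : ℝ)) * ‖gradient f (z j)‖ ^ 2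
        ≤ ∑ j ∈ Finset.range k,
            (f (z j) - f (z (j + 1)) + L * C₀ ^ 2 / 2 * (1 / ((j : ℝ) + 1))) :=
          Finset.sum_le_sum fun j _ => step j
      _ = (∑ j ∈ Finset.range k, (f (z j) - f (z (j + 1))))
          + ∑ j ∈ Finset.range k, L * C₀ ^ 2 / 2 * (1 / ((j : ℝ) + 1)) :=
          Finset.sum_add_distrib
      _ = f (z 0) - f (z k) + L * C₀ ^ 2 / 2 * ∑ j ∈ Finset.range k, (1 / ((j : ℝ) + 1)) := by
          rw [Finset.sum_range_sub' (fun i => f (z i)), Finset.mul_sum]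
  have hharm : ∑ j ∈ Finset.range k, (1 / ((j : ℝ) + 1)) ≤ 1 + Real.log k := by
    have h := harmonic_le_one_add_log k
    have hcast : ((harmonic k : ℚ) : ℝ) = ∑ j ∈ Finset.range k, (1 / ((j : ℝ) + 1)) := by
      rw [harmonic]
      push_cast
      simp [one_div]
    linarith [hcast ▸ h]
  have hlow : Real.sqrt k ≤ ∑ j ∈ Finset.range k, ((j : ℝ) + 1) ^ (-(1/2 : ℝ)) := by
    have h1 : ∀ j ∈ Finset.range k, (k : ℝ) ^ (-(1/2 : ℝ)) ≤ ((j : ℝ) + 1) ^ (-(1/2 : ℝ)) := by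
      intro j hj
      apply Real.rpow_le_rpow_of_nonpos (by positivity) _ (by norm_num)
      have : j + 1 ≤ k := Finset.mem_range.mp hj
      exact_mod_cast this
    have h2 : (k : ℝ) * (k : ℝ) ^ (-(1/2 : ℝ)) ≤ ∑ j ∈ Finset.range k, ((j : ℝ) + 1) ^ (-(1/2 : ℝ)) := by
      have := Finset.card_nsmul_le_sum (Finset.range k)
        (fun j => ((j : ℝ) + 1) ^ (-(1/2 : ℝ))) ((k : ℝ) ^ (-(1/2 : ℝ))) h1
      simpa [nsmul_eq_mul] using this
    have h3 : Real.sqrt k = (k : ℝ) * (k : ℝ) ^ (-(1/2 : ℝ)) := by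
      rw [Real.sqrt_eq_rpow]
      have := Real.rpow_add hkpos 1 (-(1/2 : ℝ))
      norm_num at this
      linarith [this]
    linarith
  -- combine
  have hchain : m * Real.sqrt k
      ≤ f (z 0) - fstar + L * C₀ ^ 2 / 2 * (1 + Real.log k) := by
    have hA : m * Real.sqrt k ≤ m * ∑ j ∈ Finset.range k, ((j : ℝ) + 1) ^ (-(1/2 : ℝ)) :=
      mul_le_mul_of_nonneg_left hlow hm_nonneg
    have hB : m * ∑ j ∈ Finset.range k, ((j : ℝ) + 1) ^ (-(1/2 : ℝ))
        ≤ ∑ j ∈ Finset.range k, ((j : ℝ) + 1) ^ (-(1/2 : ℝ)) * ‖gradient f (z j)‖ ^ 2 := by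
      rw [Finset.mul_sum]
      apply Finset.sum_le_sum
      intro j hj
      rw [mul_comm]
      exact mul_le_mul_of_nonneg_left (Finset.inf'_le _ hj)
        (Real.rpow_nonneg (by positivity) _)
    have hC : L * C₀ ^ 2 / 2 * ∑ j ∈ Finset.range k, (1 / ((j : ℝ) + 1))
        ≤ L * C₀ ^ 2 / 2 * (1 + Real.log k) :=
      mul_le_mul_of_nonneg_left hharm (by positivity)
    have hD := hbelow (z k)
    linarith
  rw [le_div_iff₀ (Real.sqrt_pos.mpr hkpos)]
  exact hchain
end

section
/- Let L : ℝ^p → ℝ satisfy Assumption: ‖∇L‖ ≤ C₀, ‖∇²L‖ ≤ C₁, and ∇²L is C₂-Lipschitz. Let L' : ℝ^p → ℝ satisfy the same bounds. Define Φ(z) = L'(z^{(N)}) where z^{(N)} is the result of N gradient-descent steps on L with step β from z. Then ∇Φ is Lipschitz with constant at most C₁(1+βC₁)^{2N} + N β C₂ (1+βC₁)^{N-1} C₀ · (1+βC₁)^{N}; in particular ∇Φ is Lipschitz continuous. -/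
open Filter Topology RealInnerProductSpace

section Aux

variable {p : ℕ}

local notation "E" => EuclideanSpace ℝ (Fin p)

private lemma comp_sub_comp_norm {F : Type*} [NormedAddCommGroup F] [NormedSpace ℝ F]
    (B₁ B₂ : E →L[ℝ] F) (A₁ A₂ : E →L[ℝ] E) :
    ‖B₁.comp A₁ - B₂.comp A₂‖ ≤ ‖B₁ - B₂‖ * ‖A₁‖ + ‖B₂‖ * ‖A₁ - A₂‖ := by
  have h : B₁.comp A₁ - B₂.comp A₂ = (B₁ - B₂).comp A₁ + B₂.comp (A₁ - A₂) := by
    ext x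
    simp
  rw [h]
  exact (norm_add_le _ _).trans (add_le_add (ContinuousLinearMap.opNorm_comp_le _ _)
    (ContinuousLinearMap.opNorm_comp_le _ _))

private lemma grad_diff (f : E → ℝ) (hf : ContDiff ℝ 2 f) :
    Differentiable ℝ (gradient f) := by
  have h1 : ContDiff ℝ 1 (fun x => fderiv ℝ f x) := hf.fderiv_right (by norm_num)
  exact (InnerProductSpace.toDual ℝ E).symm.toContinuousLinearEquiv.differentiable.comp
    (h1.differentiable one_ne_zero)

private lemma fderiv_eq_toDual_grad (f : E → ℝ) (z : E) :
    fderiv ℝ f z = InnerProductSpace.toDual ℝ E (gradient f z) := by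
  have : gradient f z = (InnerProductSpace.toDual ℝ E).symm (fderiv ℝ f z) := rfl
  rw [this, LinearIsometryEquiv.apply_symm_apply]

private lemma fderiv_sub_norm (f : E → ℝ) (a b : E) :
    ‖fderiv ℝ f a - fderiv ℝ f b‖ = ‖gradient f a - gradient f b‖ := by
  rw [fderiv_eq_toDual_grad, fderiv_eq_toDual_grad, ← map_sub,
    LinearIsometryEquiv.norm_map]

private lemma fderiv_norm_eq (f : E → ℝ) (a : E) :
    ‖fderiv ℝ f a‖ = ‖gradient f a‖ := by
  rw [fderiv_eq_toDual_grad, LinearIsometryEquiv.norm_map]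

private lemma grad_lip (f : E → ℝ) (hf : ContDiff ℝ 2 f) {C₁ : ℝ}
    (hb : ∀ z : EuclideanSpace ℝ (Fin p), ‖fderiv ℝ (gradient f) z‖ ≤ C₁) (a b : E) :
    ‖gradient f a - gradient f b‖ ≤ C₁ * ‖a - b‖ :=
  Convex.norm_image_sub_le_of_norm_fderiv_le
    (fun x _ => grad_diff f hf x) (fun x _ => hb x)
    convex_univ (Set.mem_univ b) (Set.mem_univ a)

end Aux

/-- Derivative of the `step` map: `I - β ∇²L(z)`. -/
noncomputable def metaS {p : ℕ} (L : EuclideanSpace ℝ (Fin p) → ℝ) (β : ℝ)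
    (z : EuclideanSpace ℝ (Fin p)) :
    EuclideanSpace ℝ (Fin p) →L[ℝ] EuclideanSpace ℝ (Fin p) :=
  ContinuousLinearMap.id ℝ _ - β • fderiv ℝ (gradient L) z

/-- Derivative of the `n`-fold iterate of `step` (chain rule product). -/
noncomputable def metaD {p : ℕ} (L : EuclideanSpace ℝ (Fin p) → ℝ) (β : ℝ) :
    ℕ → EuclideanSpace ℝ (Fin p) →
      (EuclideanSpace ℝ (Fin p) →L[ℝ] EuclideanSpace ℝ (Fin p))
  | 0, _ => ContinuousLinearMap.id ℝ _
  | (n+1), z =>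
      (metaS L β ((fun w => w - β • gradient L w)^[n] z)).comp (metaD L β n z)

/-- Smoothness of the N-step meta-objective `Φ(z) = L'(GD_L^N(z))`: its gradient is
Lipschitz with the explicit constant
`C₁(1+βC₁)^{2N} + NβC₂(1+βC₁)^{N-1}C₀(1+βC₁)^N`. -/
theorem meta_objective_grad_lipschitz
    (p : ℕ) (L L' : EuclideanSpace ℝ (Fin p) → ℝ) (β C₀ C₁ C₂ : ℝ) (N : ℕ)
    (hL : ContDiff ℝ 2 L) (hL' : ContDiff ℝ 2 L')
    (hβ : 0 < β) (hC₀ : 0 < C₀) (hC₁ : 0 < C₁) (hC₂ : 0 < C₂)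
    (hgradL : ∀ z : EuclideanSpace ℝ (Fin p), ‖gradient L z‖ ≤ C₀)
    (hgradL' : ∀ z : EuclideanSpace ℝ (Fin p), ‖gradient L' z‖ ≤ C₀)
    (hHessL : ∀ z : EuclideanSpace ℝ (Fin p), ‖fderiv ℝ (gradient L) z‖ ≤ C₁)
    (hHessL' : ∀ z : EuclideanSpace ℝ (Fin p), ‖fderiv ℝ (gradient L') z‖ ≤ C₁)
    (hHessLipL : ∀ z_w z_u : EuclideanSpace ℝ (Fin p),
      ‖fderiv ℝ (gradient L) z_w - fderiv ℝ (gradient L) z_u‖ ≤ C₂ * ‖z_w - z_u‖)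
    (hHessLipL' : ∀ z_w z_u : EuclideanSpace ℝ (Fin p),
      ‖fderiv ℝ (gradient L') z_w - fderiv ℝ (gradient L') z_u‖ ≤ C₂ * ‖z_w - z_u‖)
    (step : EuclideanSpace ℝ (Fin p) → EuclideanSpace ℝ (Fin p))
    (hstep : ∀ z, step z = z - β • gradient L z)
    (Φ : EuclideanSpace ℝ (Fin p) → ℝ)
    (hΦ : ∀ z, Φ z = L' (step^[N] z)) :
    ∀ z_w z_u : EuclideanSpace ℝ (Fin p),
      ‖gradient Φ z_w - gradient Φ z_u‖
        ≤ (C₁ * (1 + β * C₁) ^ (2 * N)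
            + N * β * C₂ * (1 + β * C₁) ^ (N - 1) * C₀ * (1 + β * C₁) ^ N)
          * ‖z_w - z_u‖ := by
  have hstep' : step = fun w => w - β • gradient L w := funext hstep
  subst hstep'
  set st : EuclideanSpace ℝ (Fin p) → EuclideanSpace ℝ (Fin p) :=
    fun w => w - β • gradient L w with hst
  set A : ℝ := 1 + β * C₁ with hAdef
  have hA1 : (1:ℝ) ≤ A := by nlinarith
  have hA0 : (0:ℝ) ≤ A := by linarith
  -- differentiability of gradient L
  have gLdiff : Differentiable ℝ (gradient L) := grad_diff L hL
  -- step has derivative metaS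
  have hasS : ∀ z : EuclideanSpace ℝ (Fin p), HasFDerivAt st (metaS L β z) z := by
    intro z
    exact (hasFDerivAt_id z).sub (((gLdiff z).hasFDerivAt).const_smul β)
  -- bound on metaS
  have bS : ∀ z : EuclideanSpace ℝ (Fin p), ‖metaS L β z‖ ≤ A := by
    intro z
    calc ‖metaS L β z‖
        ≤ ‖(ContinuousLinearMap.id ℝ (EuclideanSpace ℝ (Fin p)))‖
          + ‖β • fderiv ℝ (gradient L) z‖ := norm_sub_le _ _
      _ ≤ 1 + β * C₁ := by
          apply add_le_add ContinuousLinearMap.norm_id_le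
          calc ‖β • fderiv ℝ (gradient L) z‖ = ‖β‖ * ‖fderiv ℝ (gradient L) z‖ :=
                norm_smul _ _
            _ ≤ β * C₁ := by
                rw [Real.norm_eq_abs, abs_of_pos hβ]
                exact mul_le_mul_of_nonneg_left (hHessL z) hβ.le
  -- Lipschitz of metaS
  have lipS : ∀ a b : EuclideanSpace ℝ (Fin p), ‖metaS L β a - metaS L β b‖ ≤ β * C₂ * ‖a - b‖ := by
    intro a b
    have h : metaS L β a - metaS L β b
        = β • (fderiv ℝ (gradient L) b - fderiv ℝ (gradient L) a) := by
      simp only [metaS, smul_sub]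
      abel
    rw [h]
    calc ‖β • (fderiv ℝ (gradient L) b - fderiv ℝ (gradient L) a)‖
        = ‖β‖ * ‖fderiv ℝ (gradient L) b - fderiv ℝ (gradient L) a‖ := norm_smul _ _
      _ ≤ β * C₂ * ‖a - b‖ := by
          rw [Real.norm_eq_abs, abs_of_pos hβ, mul_assoc]
          apply mul_le_mul_of_nonneg_left _ hβ.le
          exact (hHessLipL b a).trans_eq (by rw [norm_sub_rev])
  -- gradient L is C₁-Lipschitz, hence st is A-Lipschitz
  have lipSt : ∀ a b : EuclideanSpace ℝ (Fin p), ‖st a - st b‖ ≤ A * ‖a - b‖ := by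
    intro a b
    have h : st a - st b = (a - b) - β • (gradient L a - gradient L b) := by
      simp only [hst, smul_sub]
      abel
    calc ‖st a - st b‖ ≤ ‖a - b‖ + ‖β • (gradient L a - gradient L b)‖ := by
          rw [h]; exact norm_sub_le _ _
      _ ≤ ‖a - b‖ + β * (C₁ * ‖a - b‖) := by
          apply add_le_add le_rfl
          calc ‖β • (gradient L a - gradient L b)‖
              = ‖β‖ * ‖gradient L a - gradient L b‖ := norm_smul _ _
            _ ≤ β * (C₁ * ‖a - b‖) := by
                rw [Real.norm_eq_abs, abs_of_pos hβ]
                exact mul_le_mul_of_nonneg_left (grad_lip L hL hHessL a b) hβ.le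
      _ = A * ‖a - b‖ := by ring
  -- iterates are Lipschitz
  have lipIter : ∀ n : ℕ, ∀ a b : EuclideanSpace ℝ (Fin p), ‖st^[n] a - st^[n] b‖ ≤ A ^ n * ‖a - b‖ := by
    intro n
    induction n with
    | zero => intro a b; simp
    | succ n ih =>
      intro a b
      rw [Function.iterate_succ_apply', Function.iterate_succ_apply']
      calc ‖st (st^[n] a) - st (st^[n] b)‖ ≤ A * ‖st^[n] a - st^[n] b‖ := lipSt _ _
        _ ≤ A * (A ^ n * ‖a - b‖) := mul_le_mul_of_nonneg_left (ih a b) hA0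
        _ = A ^ (n + 1) * ‖a - b‖ := by ring
  -- derivative of iterates
  have hasD : ∀ n : ℕ, ∀ z : EuclideanSpace ℝ (Fin p), HasFDerivAt (st^[n]) (metaD L β n z) z := by
    intro n
    induction n with
    | zero =>
      intro z
      exact hasFDerivAt_id z
    | succ n ih =>
      intro z
      have h := (hasS (st^[n] z)).comp z (ih z)
      rw [Function.iterate_succ' st n]
      exact h
  -- bound on metaD
  have bD : ∀ n : ℕ, ∀ z : EuclideanSpace ℝ (Fin p), ‖metaD L β n z‖ ≤ A ^ n := by
    intro n
    induction n with
    | zero =>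
      intro z
      rw [show metaD L β 0 z = ContinuousLinearMap.id ℝ _ from rfl, pow_zero]
      exact ContinuousLinearMap.norm_id_le
    | succ n ih =>
      intro z
      calc ‖metaD L β (n+1) z‖ ≤ ‖metaS L β (st^[n] z)‖ * ‖metaD L β n z‖ :=
            ContinuousLinearMap.opNorm_comp_le _ _
        _ ≤ A * A ^ n := by
            apply mul_le_mul (bS _) (ih z) (norm_nonneg _) hA0
        _ = A ^ (n + 1) := by ring
  -- Lipschitz of metaD
  have lipD : ∀ n : ℕ, ∀ a b : EuclideanSpace ℝ (Fin p),
      ‖metaD L β n a - metaD L β n b‖ ≤ n * β * C₂ * A ^ (2 * n - 1) * ‖a - b‖ := by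
    intro n
    induction n with
    | zero =>
      intro a b
      rw [show metaD L β 0 a = ContinuousLinearMap.id ℝ _ from rfl,
        show metaD L β 0 b = ContinuousLinearMap.id ℝ _ from rfl, sub_self, norm_zero]
      push_cast
      simp
    | succ n ih =>
      intro a b
      have key : ‖metaD L β (n+1) a - metaD L β (n+1) b‖
          ≤ ‖metaS L β (st^[n] a) - metaS L β (st^[n] b)‖ * ‖metaD L β n a‖
            + ‖metaS L β (st^[n] b)‖ * ‖metaD L β n a - metaD L β n b‖ :=
        comp_sub_comp_norm _ _ _ _
      have t1 : ‖metaS L β (st^[n] a) - metaS L β (st^[n] b)‖ * ‖metaD L β n a‖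
          ≤ (β * C₂ * (A ^ n * ‖a - b‖)) * A ^ n := by
        apply mul_le_mul _ (bD n a) (norm_nonneg _) (by positivity)
        exact (lipS _ _).trans (by
          apply mul_le_mul_of_nonneg_left (lipIter n a b) (by positivity))
      have t2 : ‖metaS L β (st^[n] b)‖ * ‖metaD L β n a - metaD L β n b‖
          ≤ A * (n * β * C₂ * A ^ (2 * n - 1) * ‖a - b‖) := by
        apply mul_le_mul (bS _) (ih a b) (norm_nonneg _) hA0
      have hAA : (n : ℝ) * (A * A ^ (2 * n - 1)) ≤ n * A ^ (2 * n) := by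
        rcases Nat.eq_zero_or_pos n with h0 | h0
        · simp [h0]
        · have : 2 * n - 1 + 1 = 2 * n := by omega
          rw [← pow_succ', this]
      have step1 : ‖metaD L β (n+1) a - metaD L β (n+1) b‖
          ≤ ((n : ℝ) + 1) * β * C₂ * A ^ (2 * n) * ‖a - b‖ := by
        refine key.trans ((add_le_add t1 t2).trans ?_)
        have hnn : (0:ℝ) ≤ β * C₂ * ‖a - b‖ := by positivity
        calc (β * C₂ * (A ^ n * ‖a - b‖)) * A ^ n
              + A * (n * β * C₂ * A ^ (2 * n - 1) * ‖a - b‖)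
            = β * C₂ * ‖a - b‖ * (A ^ n * A ^ n)
              + β * C₂ * ‖a - b‖ * ((n : ℝ) * (A * A ^ (2 * n - 1))) := by ring
          _ ≤ β * C₂ * ‖a - b‖ * (A ^ (2 * n))
              + β * C₂ * ‖a - b‖ * ((n : ℝ) * A ^ (2 * n)) := by
              apply add_le_add
              · apply mul_le_mul_of_nonneg_left _ hnn
                rw [← pow_add, two_mul]
              · exact mul_le_mul_of_nonneg_left hAA hnn
          _ = ((n : ℝ) + 1) * β * C₂ * A ^ (2 * n) * ‖a - b‖ := by ring
      refine step1.trans ?_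
      have hexp : 2 * (n + 1) - 1 = 2 * n + 1 := by omega
      rw [hexp, pow_succ]
      push_cast
      have : ((n : ℝ) + 1) * β * C₂ * A ^ (2 * n) * ‖a - b‖ * 1
          ≤ ((n : ℝ) + 1) * β * C₂ * (A ^ (2 * n) * A) * ‖a - b‖ := by
        rw [mul_one]
        have h1 : ((n : ℝ) + 1) * β * C₂ * A ^ (2 * n) * ‖a - b‖
            = ((n : ℝ) + 1) * β * C₂ * (A ^ (2 * n) * 1) * ‖a - b‖ := by ring
        rw [h1]
        apply mul_le_mul_of_nonneg_right _ (norm_nonneg _)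
        apply mul_le_mul_of_nonneg_left _ (by positivity)
        exact mul_le_mul_of_nonneg_left hA1 (by positivity)
      linarith [this]
    -- end lipD
  -- derivative of Φ
  have hΦ' : Φ = fun z => L' (st^[N] z) := funext hΦ
  have hasΦ : ∀ z : EuclideanSpace ℝ (Fin p), HasFDerivAt Φ ((fderiv ℝ L' (st^[N] z)).comp (metaD L β N z)) z := by
    intro z
    rw [hΦ']
    exact ((hL'.differentiable (by norm_num) _).hasFDerivAt).comp z (hasD N z)
  have fΦ : ∀ z : EuclideanSpace ℝ (Fin p), fderiv ℝ Φ z = (fderiv ℝ L' (st^[N] z)).comp (metaD L β N z) :=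
    fun z => (hasΦ z).fderiv
  intro w u
  rw [← fderiv_sub_norm, fΦ w, fΦ u]
  have key := comp_sub_comp_norm (fderiv ℝ L' (st^[N] w)) (fderiv ℝ L' (st^[N] u))
    (metaD L β N w) (metaD L β N u)
  refine key.trans ?_
  have t1 : ‖fderiv ℝ L' (st^[N] w) - fderiv ℝ L' (st^[N] u)‖ * ‖metaD L β N w‖
      ≤ (C₁ * (A ^ N * ‖w - u‖)) * A ^ N := by
    apply mul_le_mul _ (bD N w) (norm_nonneg _) (by positivity)
    rw [fderiv_sub_norm]
    exact (grad_lip L' hL' hHessL' _ _).trans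
      (mul_le_mul_of_nonneg_left (lipIter N w u) hC₁.le)
  have t2 : ‖fderiv ℝ L' (st^[N] u)‖ * ‖metaD L β N w - metaD L β N u‖
      ≤ C₀ * (N * β * C₂ * A ^ (2 * N - 1) * ‖w - u‖) := by
    apply mul_le_mul _ (lipD N w u) (norm_nonneg _) hC₀.le
    rw [fderiv_norm_eq]
    exact hgradL' _
  refine (add_le_add t1 t2).trans ?_
  have hpow1 : A ^ N * A ^ N = A ^ (2 * N) := by rw [← pow_add, two_mul]
  have hpow2 : (N : ℝ) * A ^ (2 * N - 1) ≤ N * (A ^ (N - 1) * A ^ N) := by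
    rcases Nat.eq_zero_or_pos N with h0 | h0
    · simp [h0]
    · have : N - 1 + N = 2 * N - 1 := by omega
      rw [← pow_add, this]
  calc (C₁ * (A ^ N * ‖w - u‖)) * A ^ N + C₀ * (N * β * C₂ * A ^ (2 * N - 1) * ‖w - u‖)
      = C₁ * (A ^ N * A ^ N) * ‖w - u‖
        + β * C₂ * C₀ * ‖w - u‖ * ((N : ℝ) * A ^ (2 * N - 1)) := by ring
    _ ≤ C₁ * A ^ (2 * N) * ‖w - u‖
        + β * C₂ * C₀ * ‖w - u‖ * ((N : ℝ) * (A ^ (N - 1) * A ^ N)) := by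
        apply add_le_add
        · rw [hpow1]
        · exact mul_le_mul_of_nonneg_left hpow2 (by positivity)
    _ = (C₁ * A ^ (2 * N) + N * β * C₂ * A ^ (N - 1) * C₀ * A ^ N) * ‖w - u‖ := by ring
end
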